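/- Let G be a graph with a flat orthogonal representation φ : V(G) → ℂ^d (all entries of each φ(v) have modulus 1/√d, adjacent vertices get orthogonal vectors). For each vertex v and i ∈ [d], let r_{v,i} = √d · (φ(v) ∘ f_i) where f_i is the i-th column of the d×d Fourier matrix F with F_{kj} = exp(2πi·kj/d)/√d and ∘ is the entrywise product. Then for each v, the vectors (r_{v,i})_{i∈[d]} form an orthonormal basis of ℂ^d, and for adjacent vertices v ∼ w, r_{v,i} ⟂ r_{w,i} for all i. Hence the projections v_i onto r_{v,i} constitute a quantum d-coloring of G. -/

import Mathlib

open Finset Matrix Complex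

private theorem fourier_sum_zero (d : ℕ) (hd : 0 < d) (m : ℤ) (hm : ¬ (d:ℤ) ∣ m) :
    ∑ k : Fin d, Complex.exp (2 * Real.pi * Complex.I * m * k / d) = 0 := by
  have hd0 : (d:ℂ) ≠ 0 := Nat.cast_ne_zero.mpr hd.ne'
  set ζ := Complex.exp (2 * Real.pi * Complex.I * m / d) with hζ
  have hζ1 : ζ ≠ 1 := by
    intro h
    rw [Complex.exp_eq_one_iff] at h
    obtain ⟨n, hn⟩ := h
    apply hm
    have h2 : (2:ℂ) * Real.pi * Complex.I ≠ 0 := by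
      simp [Real.pi_ne_zero, Complex.I_ne_zero]
    have h3 : (2*(Real.pi:ℂ)*Complex.I) * ((m:ℂ)/d) = (2*(Real.pi:ℂ)*Complex.I) * n := by
      linear_combination hn
    have h4 : (m:ℂ)/d = n := mul_left_cancel₀ h2 h3
    rw [div_eq_iff hd0] at h4
    have : m = n * d := by exact_mod_cast h4
    exact ⟨n, by rw [this, mul_comm]⟩
  have hζd : ζ ^ d = 1 := by
    rw [hζ, ← Complex.exp_nat_mul]
    have : (d:ℂ) * (2 * Real.pi * Complex.I * m / d) = m * (2 * Real.pi * Complex.I) := by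
      field_simp
    rw [this, Complex.exp_int_mul_two_pi_mul_I]
  calc ∑ k : Fin d, Complex.exp (2 * Real.pi * Complex.I * m * k / d)
      = ∑ k ∈ Finset.range d, ζ ^ k := by
        rw [Fin.sum_univ_eq_sum_range (fun k => Complex.exp (2 * Real.pi * Complex.I * m * k / d))]
        exact Finset.sum_congr rfl fun k _ => by
          rw [← Complex.exp_nat_mul]; ring_nf
    _ = (ζ ^ d - 1) / (ζ - 1) := geom_sum_eq hζ1 d
    _ = 0 := by rw [hζd]; simp

private theorem fourier_sum_zero' (d : ℕ) (hd : 0 < d) (i i' : Fin d) (hne : i ≠ i') :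
    ∑ k : Fin d, Complex.exp (2 * Real.pi * Complex.I * (((i':ℕ):ℤ) - ((i:ℕ):ℤ)) * k / d) = 0 := by
  have hm : ¬ (d:ℤ) ∣ (((i':ℕ):ℤ) - ((i:ℕ):ℤ)) := by
    intro hdvd
    have hm0 : ((i':ℕ):ℤ) - ((i:ℕ):ℤ) ≠ 0 := by
      intro h
      exact hne (Fin.ext (by omega)).symm
    refine hm0 (Int.eq_zero_of_dvd_of_natAbs_lt_natAbs hdvd ?_)
    have h1 : (i:ℕ) < d := i.isLt
    have h2 : (i':ℕ) < d := i'.isLt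
    simp only [Int.natAbs_natCast]
    omega
  have h := fourier_sum_zero d hd (((i':ℕ):ℤ) - ((i:ℕ):ℤ)) hm
  push_cast at h ⊢
  exact h

theorem flat_orthogonal_representation_gives_quantum_coloring
    {V : Type*} (G : SimpleGraph V) (d : ℕ) (hd : 0 < d)
    (φ : V → Fin d → ℂ)
    (hflat : ∀ v j, ‖φ v j‖ = 1 / Real.sqrt d)
    (horth : ∀ u v, G.Adj u v → ∑ j, star (φ u j) * φ v j = 0)
    (r : V → Fin d → Fin d → ℂ)
    (hr : ∀ v i k, r v i k =
      Real.sqrt d * (φ v k *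
        (Complex.exp (2 * Real.pi * Complex.I * (k : ℕ) * (i : ℕ) / d) / Real.sqrt d))) :
    (∀ v (i i' : Fin d),
      ∑ k, star (r v i k) * r v i' k = if i = i' then 1 else 0) ∧
    (∀ u v, G.Adj u v → ∀ i, ∑ k, star (r u i k) * r v i k = 0) ∧
    (∀ v, ∑ i, (Matrix.of fun a b => r v i a * star (r v i b)) = (1 : Matrix (Fin d) (Fin d) ℂ)) ∧
    (∀ u v, G.Adj u v → ∀ i,
      (Matrix.of fun a b => r u i a * star (r u i b)) *
      (Matrix.of fun a b => r v i a * star (r v i b)) = 0) := by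
  have hd0 : (d:ℂ) ≠ 0 := Nat.cast_ne_zero.mpr hd.ne'
  have hsd : ((Real.sqrt d : ℝ) : ℂ) ≠ 0 := by
    simp only [ne_eq, Complex.ofReal_eq_zero]
    exact Real.sqrt_ne_zero'.mpr (by exact_mod_cast hd)
  -- simplified form of r
  have hr' : ∀ v i k, r v i k =
      φ v k * Complex.exp (2 * Real.pi * Complex.I * (k : ℕ) * (i : ℕ) / d) := by
    intro v i k
    rw [hr]
    field_simp
  -- conjugate of the exponential
  have hconj : ∀ (a b : ℕ), star (Complex.exp (2 * Real.pi * Complex.I * a * b / d))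
      = Complex.exp (-(2 * Real.pi * Complex.I * a * b / d)) := by
    intro a b
    rw [Complex.star_def, ← Complex.exp_conj]
    congr 1
    simp [map_div₀, Complex.conj_I, map_ofNat]
    ring
  -- modulus condition
  have hnorm : ∀ v k, star (φ v k) * φ v k = 1/(d:ℂ) := by
    intro v k
    rw [Complex.star_def, mul_comm, Complex.mul_conj, Complex.normSq_eq_norm_sq, hflat]
    have : ((1:ℝ) / Real.sqrt d)^2 = 1/d := by
      rw [div_pow, one_pow, Real.sq_sqrt (Nat.cast_nonneg d)]
    rw [this]; push_cast; ring
  -- key product formula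
  have hprod : ∀ v w (i i' k : Fin d), star (r v i k) * r w i' k
      = (star (φ v k) * φ w k) *
        Complex.exp (2 * Real.pi * Complex.I * (((i':ℕ):ℤ) - ((i:ℕ):ℤ)) * (k:ℕ) / d) := by
    intro v w i i' k
    rw [hr', hr', star_mul', hconj, mul_mul_mul_comm, ← Complex.exp_add]
    congr 2
    push_cast
    ring
  -- second product formula (for matrix entries)
  have hprod2 : ∀ v w (i : Fin d) (a b : Fin d), r v i a * star (r w i b)
      = (φ v a * star (φ w b)) *
        Complex.exp (2 * Real.pi * Complex.I * (((a:ℕ):ℤ) - ((b:ℕ):ℤ)) * (i:ℕ) / d) := by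
    intro v w i a b
    rw [hr', hr', star_mul', hconj, mul_mul_mul_comm, ← Complex.exp_add]
    congr 2
    push_cast
    ring
  -- Part 1
  have H1 : ∀ v (i i' : Fin d),
      ∑ k, star (r v i k) * r v i' k = if i = i' then 1 else 0 := by
    intro v i i'
    by_cases h : i = i'
    · subst h
      simp only [if_true]
      have : ∀ k : Fin d, star (r v i k) * r v i k = 1/(d:ℂ) := by
        intro k
        rw [hprod, hnorm]
        simp
      rw [Finset.sum_congr rfl (fun k _ => this k)]
      simp [Finset.card_univ]
      field_simp
    · rw [if_neg h]
      calc ∑ k, star (r v i k) * r v i' k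
          = ∑ k : Fin d, (1/(d:ℂ)) *
            Complex.exp (2 * Real.pi * Complex.I * (((i':ℕ):ℤ) - ((i:ℕ):ℤ)) * (k:ℕ) / d) := by
            exact Finset.sum_congr rfl fun k _ => by rw [hprod, hnorm]
        _ = (1/(d:ℂ)) * ∑ k : Fin d,
            Complex.exp (2 * Real.pi * Complex.I * (((i':ℕ):ℤ) - ((i:ℕ):ℤ)) * (k:ℕ) / d) := by
            rw [Finset.mul_sum]
        _ = 0 := by rw [fourier_sum_zero' d hd i i' h, mul_zero]
  -- Part 2
  have H2 : ∀ u v, G.Adj u v → ∀ i, ∑ k, star (r u i k) * r v i k = 0 := by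
    intro u v huv i
    calc ∑ k, star (r u i k) * r v i k
        = ∑ k, star (φ u k) * φ v k := by
          refine Finset.sum_congr rfl fun k _ => ?_
          rw [hprod]
          simp
      _ = 0 := horth u v huv
  refine ⟨H1, H2, ?_, ?_⟩
  -- Part 3
  · intro v
    ext a b
    rw [Matrix.sum_apply]
    simp only [Matrix.of_apply]
    by_cases h : a = b
    · subst h
      have : ∀ i : Fin d, r v i a * star (r v i a) = 1/(d:ℂ) := by
        intro i
        rw [hprod2]
        simp only [sub_self]
        rw [mul_comm (φ v a), hnorm]
        simp
      rw [Finset.sum_congr rfl (fun i _ => this i), Matrix.one_apply_eq]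
      simp [Finset.card_univ]
      field_simp
    · calc ∑ i, r v i a * star (r v i b)
          = (φ v a * star (φ v b)) * ∑ i : Fin d,
            Complex.exp (2 * Real.pi * Complex.I * (((a:ℕ):ℤ) - ((b:ℕ):ℤ)) * (i:ℕ) / d) := by
            rw [Finset.mul_sum]
            exact Finset.sum_congr rfl fun i _ => by rw [hprod2]
        _ = 0 := by
            rw [fourier_sum_zero' d hd b a (fun hba => h (hba.symm)), mul_zero]
        _ = (1 : Matrix (Fin d) (Fin d) ℂ) a b := by rw [Matrix.one_apply_ne h]
  -- Part 4
  · intro u v huv i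
    ext a b
    rw [Matrix.mul_apply]
    simp only [Matrix.of_apply, Matrix.zero_apply]
    calc ∑ c, r u i a * star (r u i c) * (r v i c * star (r v i b))
        = (r u i a * star (r v i b)) * ∑ c, star (r u i c) * r v i c := by
          rw [Finset.mul_sum]
          exact Finset.sum_congr rfl fun c _ => by ring
      _ = 0 := by rw [H2 u v huv i, mul_zero]
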